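/- arXiv:1402.5185 — 4 statements merged into one kernel-verified Lean document; each statement's English description precedes it below -/
import Mathlib

section
/- Let q ≥ 0. For every φ ∈ L¹(ℝ), the functions 𝓛₊[φ] and 𝓛₋[φ] are integrable on ℝ and satisfy ‖𝓛₊[φ]‖_{L¹} ≤ 2‖φ‖_{L¹} and ‖𝓛₋[φ]‖_{L¹} ≤ 2‖φ‖_{L¹}. -/
open Complex MeasureTheory

/-- The operator `𝓛₊[φ](x) = φ(x) − q·1₋(x) e^{qx} ∫_x^{−x} e^{q|y|} φ(y) dy`. -/
noncomputable def Lplus (q : ℝ) (φ : ℝ → ℂ) (x : ℝ) : ℂ :=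
  φ x - (if x < 0 then (1 : ℂ) else 0) * q * Real.exp (q * x) *
    ∫ y in x..(-x), (Real.exp (q * |y|) : ℂ) * φ y

/-- The operator `𝓛₋[φ](x) = φ(x) − q·1₊(x) e^{−qx} ∫_{−x}^{x} e^{q|y|} φ(y) dy`. -/
noncomputable def Lminus (q : ℝ) (φ : ℝ → ℂ) (x : ℝ) : ℂ :=
  φ x - (if 0 ≤ x then (1 : ℂ) else 0) * q * Real.exp (-(q * x)) *
    ∫ y in (-x)..x, (Real.exp (q * |y|) : ℂ) * φ y

/-! ### Auxiliary definitions and lemmas -/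

/-- The kernel part of `Lplus`. -/
noncomputable def Gplus (q : ℝ) (φ : ℝ → ℂ) (x : ℝ) : ℂ :=
  (if x < 0 then (1 : ℂ) else 0) * q * Real.exp (q * x) *
    ∫ y in x..(-x), (Real.exp (q * |y|) : ℂ) * φ y

/-- The kernel part of `Lminus`. -/
noncomputable def Gminus (q : ℝ) (φ : ℝ → ℂ) (x : ℝ) : ℂ :=
  (if 0 ≤ x then (1 : ℂ) else 0) * q * Real.exp (-(q * x)) *
    ∫ y in (-x)..x, (Real.exp (q * |y|) : ℂ) * φ y

/-- The two-variable kernel. -/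
noncomputable def Fker (q : ℝ) (φ : ℝ → ℂ) : ℝ × ℝ → ℂ := fun p =>
  if p.1 < 0 ∧ p.2 ∈ Set.Ioc p.1 (-p.1) then
    ((q * Real.exp (q * p.1) * Real.exp (q * |p.2|) : ℝ) : ℂ) * φ p.2 else 0

lemma expInt {q : ℝ} (hq : 0 < q) (c : ℝ) :
    IntegrableOn (fun x => q * Real.exp (q * x)) (Set.Iic c) := by
  have h1 : Integrable ((Set.Iic (q * c)).indicator Real.exp) :=
    (integrable_indicator_iff measurableSet_Iic).2 (integrableOn_exp_Iic _)
  have h2 : Integrable (fun x => (Set.Iic (q * c)).indicator Real.exp (q * x)) :=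
    (integrable_comp_mul_left_iff _ hq.ne').2 h1
  have h3 : (fun x => (Set.Iic (q * c)).indicator Real.exp (q * x)) =
      (Set.Iic c).indicator (fun x => Real.exp (q * x)) := by
    funext x
    by_cases hx : x ≤ c
    · rw [Set.indicator_of_mem (show q * x ∈ Set.Iic (q * c) from by
        simpa using mul_le_mul_of_nonneg_left hx hq.le), Set.indicator_of_mem (Set.mem_Iic.2 hx)]
    · rw [Set.indicator_of_notMem (show q * x ∉ Set.Iic (q * c) from by
        simp only [Set.mem_Iic, not_le] at hx ⊢; exact mul_lt_mul_of_pos_left hx hq),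
        Set.indicator_of_notMem (by simpa using hx)]
  rw [h3] at h2
  exact ((integrable_indicator_iff measurableSet_Iic).1 h2).const_mul q

lemma expIntegral {q : ℝ} (hq : 0 < q) (c : ℝ) :
    ∫ x in Set.Iic c, q * Real.exp (q * x) = Real.exp (q * c) := by
  have hd : ∀ x ∈ Set.Iic c, HasDerivAt (fun x => Real.exp (q * x)) (q * Real.exp (q * x)) x := by
    intro x _
    have : HasDerivAt (fun x : ℝ => q * x) q x := by
      simpa using (hasDerivAt_id x).const_mul q
    simpa [mul_comm] using this.exp
  have ht : Filter.Tendsto (fun x => Real.exp (q * x)) Filter.atBot (nhds 0) := by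
    apply Real.tendsto_exp_atBot.comp
    exact Filter.Tendsto.const_mul_atBot hq Filter.tendsto_id
  simpa using MeasureTheory.integral_Iic_of_hasDerivAt_of_tendsto' hd (expInt hq c) ht

lemma F_slice (q : ℝ) (φ : ℝ → ℂ) (y : ℝ) :
    (fun x => Fker q φ (x, y)) =ᵐ[volume]
      fun x => (Set.Iic (-|y|)).indicator (fun x => q * Real.exp (q * x)) x •
        ((Real.exp (q * |y|) : ℂ) * φ y) := by
  have h0 : ∀ᵐ x : ℝ, x ≠ -|y| := by
    rw [MeasureTheory.ae_iff]
    simpa using measure_singleton (α := ℝ) (-|y|)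
  filter_upwards [h0] with x hx
  by_cases hm : x < -|y|
  · have c1 : x < 0 := lt_of_lt_of_le hm (neg_nonpos.2 (abs_nonneg y))
    have c2 : x < y := lt_of_lt_of_le hm (neg_abs_le y)
    have c3 : y ≤ -x := by linarith [le_abs_self y]
    have hc : x < 0 ∧ y ∈ Set.Ioc x (-x) := ⟨c1, Set.mem_Ioc.2 ⟨c2, c3⟩⟩
    rw [Set.indicator_of_mem (Set.mem_Iic.2 hm.le)]
    simp only [Fker, if_pos hc, real_smul]
    push_cast
    ring
  · have hnm : ¬(x < 0 ∧ y ∈ Set.Ioc x (-x)) := by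
      rintro ⟨h1, h2, h3⟩
      have hle : x ≤ -|y| := by
        rcases abs_cases y with ⟨ha, _⟩ | ⟨ha, _⟩ <;> rw [ha] <;> linarith
      exact hm (lt_of_le_of_ne hle hx)
    rw [Set.indicator_of_notMem (Set.notMem_Iic.2 (lt_of_le_of_ne (not_lt.1 hm) (Ne.symm hx)))]
    simp only [Fker, if_neg hnm, zero_smul]

lemma F_meas (q : ℝ) {φ : ℝ → ℂ} (hφ : AEStronglyMeasurable φ volume) :
    AEStronglyMeasurable (Fker q φ) (volume.prod volume) := by
  have hs : MeasurableSet {p : ℝ × ℝ | p.1 < 0 ∧ p.2 ∈ Set.Ioc p.1 (-p.1)} := by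
    have he : {p : ℝ × ℝ | p.1 < 0 ∧ p.2 ∈ Set.Ioc p.1 (-p.1)} =
        {p : ℝ × ℝ | p.1 < 0} ∩ ({p : ℝ × ℝ | p.1 < p.2} ∩ {p : ℝ × ℝ | p.2 ≤ -p.1}) := by
      ext p; simp [Set.mem_Ioc, and_assoc]
    rw [he]
    exact (measurableSet_lt measurable_fst measurable_const).inter
      ((measurableSet_lt measurable_fst measurable_snd).inter
        (measurableSet_le measurable_snd measurable_fst.neg))
  have hg : AEStronglyMeasurable
      (fun p : ℝ × ℝ => ((q * Real.exp (q * p.1) * Real.exp (q * |p.2|) : ℝ) : ℂ) * φ p.2)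
      (volume.prod volume) := by
    refine AEStronglyMeasurable.mul ?_ hφ.comp_snd
    apply Continuous.aestronglyMeasurable
    exact continuous_ofReal.comp (by fun_prop)
  have he2 : Fker q φ = {p : ℝ × ℝ | p.1 < 0 ∧ p.2 ∈ Set.Ioc p.1 (-p.1)}.indicator
      (fun p => ((q * Real.exp (q * p.1) * Real.exp (q * |p.2|) : ℝ) : ℂ) * φ p.2) := by
    funext p
    by_cases h : p.1 < 0 ∧ p.2 ∈ Set.Ioc p.1 (-p.1)
    · simp only [Fker, if_pos h]
      exact (Set.indicator_of_mem (show p ∈ {p : ℝ × ℝ | p.1 < 0 ∧ p.2 ∈ Set.Ioc p.1 (-p.1)}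
        from h) (fun p => ((q * Real.exp (q * p.1) * Real.exp (q * |p.2|) : ℝ) : ℂ) * φ p.2)).symm
    · simp only [Fker, if_neg h]
      exact (Set.indicator_of_notMem (show p ∉ {p : ℝ × ℝ | p.1 < 0 ∧ p.2 ∈ Set.Ioc p.1 (-p.1)}
        from h) (fun p => ((q * Real.exp (q * p.1) * Real.exp (q * |p.2|) : ℝ) : ℂ) * φ p.2)).symm
  rw [he2]
  exact hg.indicator hs

lemma slice_int {q : ℝ} (hq : 0 < q) (φ : ℝ → ℂ) (y : ℝ) :
    Integrable (fun x => Fker q φ (x, y)) := by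
  refine Integrable.congr ?_ (F_slice q φ y).symm
  exact ((integrable_indicator_iff measurableSet_Iic).2 (expInt hq _)).smul_const _

lemma slice_norm {q : ℝ} (hq : 0 < q) (φ : ℝ → ℂ) (y : ℝ) :
    ∫ x, ‖Fker q φ (x, y)‖ = ‖φ y‖ := by
  have h1 : (fun x => ‖Fker q φ (x, y)‖) =ᵐ[volume]
      fun x => (Set.Iic (-|y|)).indicator (fun x => q * Real.exp (q * x)) x *
        (Real.exp (q * |y|) * ‖φ y‖) := by
    filter_upwards [F_slice q φ y] with x hx
    rw [hx, norm_smul, norm_mul]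
    have hnn : (0:ℝ) ≤ (Set.Iic (-|y|)).indicator (fun x => q * Real.exp (q * x)) x :=
      Set.indicator_nonneg (fun t _ => by positivity) x
    rw [Real.norm_eq_abs, _root_.abs_of_nonneg hnn]
    rw [Complex.norm_real, Real.norm_eq_abs, Real.abs_exp]
  rw [integral_congr_ae h1, integral_mul_const, integral_indicator measurableSet_Iic,
    expIntegral hq]
  rw [← mul_assoc, ← Real.exp_add]
  simp

lemma Fint {q : ℝ} (hq : 0 < q) {φ : ℝ → ℂ} (hφ : Integrable φ) :
    Integrable (Fker q φ) (volume.prod volume) := by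
  refine (integrable_prod_iff' (F_meas q hφ.aestronglyMeasurable)).2 ⟨?_, ?_⟩
  · exact Filter.Eventually.of_forall (slice_int hq φ)
  · simp only [slice_norm hq φ]
    exact hφ.norm

lemma G_eq {q : ℝ} (hq : 0 < q) (φ : ℝ → ℂ) (x : ℝ) :
    Gplus q φ x = ∫ y, Fker q φ (x, y) := by
  by_cases hx : x < 0
  · have hle : x ≤ -x := by linarith
    simp only [Gplus, if_pos hx, one_mul]
    rw [intervalIntegral.integral_of_le hle]
    have hpt : ∀ y, Fker q φ (x, y) = (Set.Ioc x (-x)).indicator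
        (fun y => ((q * Real.exp (q * x) * Real.exp (q * |y|) : ℝ) : ℂ) * φ y) y := by
      intro y
      by_cases hy : y ∈ Set.Ioc x (-x)
      · have hc : x < 0 ∧ y ∈ Set.Ioc x (-x) := ⟨hx, hy⟩
        simp only [Fker, if_pos hc]
        rw [Set.indicator_of_mem hy]
      · simp only [Fker]
        rw [if_neg (fun h => hy h.2), Set.indicator_of_notMem hy]
    simp only [hpt]
    rw [integral_indicator measurableSet_Ioc]
    have h2 : ∫ y in Set.Ioc x (-x), ((q * Real.exp (q * x) * Real.exp (q * |y|) : ℝ) : ℂ) * φ y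
        = ((q * Real.exp (q * x) : ℝ) : ℂ) *
          ∫ y in Set.Ioc x (-x), (Real.exp (q * |y|) : ℂ) * φ y := by
      rw [← integral_const_mul]
      exact integral_congr_ae (Filter.Eventually.of_forall fun y => by push_cast; ring)
    rw [h2]
    push_cast
    ring
  · simp only [Gplus, if_neg hx, zero_mul]
    have hpt : ∀ y, Fker q φ (x, y) = 0 := fun y => by
      simp only [Fker]; rw [if_neg (fun h => hx h.1)]
    simp [hpt]

lemma Gplus_int_bound {q : ℝ} (hq : 0 ≤ q) {φ : ℝ → ℂ} (hφ : Integrable φ) :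
    Integrable (Gplus q φ) ∧ (∫ x, ‖Gplus q φ x‖) ≤ ∫ y, ‖φ y‖ := by
  rcases eq_or_lt_of_le hq with rfl | hq
  · have h0 : Gplus 0 φ = fun _ => 0 := funext fun x => by simp [Gplus]
    rw [h0]
    refine ⟨integrable_zero _ _ _, ?_⟩
    simp only [norm_zero, integral_zero]
    exact integral_nonneg fun y => norm_nonneg _
  · have hF := Fint hq hφ
    have hg : Gplus q φ = fun x => ∫ y, Fker q φ (x, y) := funext (G_eq hq φ)
    refine ⟨hg ▸ hF.integral_prod_left, ?_⟩
    rw [hg]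
    have h1 : (∫ x, ‖∫ y, Fker q φ (x, y)‖) ≤ ∫ x, ∫ y, ‖Fker q φ (x, y)‖ :=
      integral_mono hF.integral_prod_left.norm hF.integral_norm_prod_left
        (fun x => norm_integral_le_integral_norm _)
    have h2 : (∫ x, ∫ y, ‖Fker q φ (x, y)‖) = ∫ y, ∫ x, ‖Fker q φ (x, y)‖ :=
      integral_integral_swap hF.norm
    have h3 : (∫ y, ∫ x, ‖Fker q φ (x, y)‖) = ∫ y, ‖φ y‖ := by
      simp only [slice_norm hq φ]
    rw [h2, h3] at h1
    exact h1

lemma Gminus_eq (q : ℝ) (φ : ℝ → ℂ) (x : ℝ) :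
    Gminus q φ x = Gplus q (fun y => φ (-y)) (-x) := by
  simp only [Gminus, Gplus, neg_neg]
  have hI : (∫ y in (-x)..x, (Real.exp (q * |y|) : ℂ) * φ (-y))
      = ∫ y in (-x)..x, (Real.exp (q * |y|) : ℂ) * φ y := by
    have h := intervalIntegral.integral_comp_neg (a := -x) (b := x)
      (fun y => (Real.exp (q * |y|) : ℂ) * φ y)
    simpa [abs_neg] using h
  rw [hI]
  rcases lt_trichotomy x 0 with h | h | h
  · rw [if_neg (not_le.2 h), if_neg (by simp; linarith : ¬(-x < 0))]
    ring
  · subst h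
    simp
  · rw [if_pos h.le, if_pos (by simpa using h)]
    rw [mul_neg q x]

lemma Gminus_int_bound {q : ℝ} (hq : 0 ≤ q) {φ : ℝ → ℂ} (hφ : Integrable φ) :
    Integrable (Gminus q φ) ∧ (∫ x, ‖Gminus q φ x‖) ≤ ∫ y, ‖φ y‖ := by
  have hψ : Integrable (fun y => φ (-y)) := hφ.comp_neg
  obtain ⟨h1, h2⟩ := Gplus_int_bound hq hψ
  have he : Gminus q φ = fun x => Gplus q (fun y => φ (-y)) (-x) := funext (Gminus_eq q φ)
  rw [he]
  refine ⟨h1.comp_neg, ?_⟩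
  calc ∫ x, ‖Gplus q (fun y => φ (-y)) (-x)‖
      = ∫ x, ‖Gplus q (fun y => φ (-y)) x‖ :=
        integral_neg_eq_self (fun x => ‖Gplus q (fun y => φ (-y)) x‖) volume
    _ ≤ ∫ y, ‖φ (-y)‖ := h2
    _ = ∫ y, ‖φ y‖ := integral_neg_eq_self (fun y => ‖φ y‖) volume

theorem Lpm_L1_bound (q : ℝ) (hq : 0 ≤ q) (φ : ℝ → ℂ) (hφ : Integrable φ) :
    Integrable (Lplus q φ) ∧ Integrable (Lminus q φ) ∧
    (∫ x : ℝ, ‖Lplus q φ x‖) ≤ 2 * ∫ x : ℝ, ‖φ x‖ ∧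
    (∫ x : ℝ, ‖Lminus q φ x‖) ≤ 2 * ∫ x : ℝ, ‖φ x‖ := by
  obtain ⟨hGp, hGpb⟩ := Gplus_int_bound hq hφ
  obtain ⟨hGm, hGmb⟩ := Gminus_int_bound hq hφ
  have hLp : Lplus q φ = fun x => φ x - Gplus q φ x := rfl
  have hLm : Lminus q φ = fun x => φ x - Gminus q φ x := rfl
  have key : ∀ G : ℝ → ℂ, Integrable G → (∫ x, ‖G x‖) ≤ ∫ x, ‖φ x‖ →
      (∫ x, ‖φ x - G x‖) ≤ 2 * ∫ x, ‖φ x‖ := by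
    intro G hG hGb
    have h1 : (∫ x, ‖φ x - G x‖) ≤ ∫ x, (‖φ x‖ + ‖G x‖) :=
      integral_mono (hφ.sub hG).norm (hφ.norm.add hG.norm) (fun x => norm_sub_le _ _)
    rw [integral_add hφ.norm hG.norm] at h1
    linarith
  refine ⟨hLp ▸ hφ.sub hGp, hLm ▸ hφ.sub hGm, ?_, ?_⟩
  · simp only [hLp]
    exact key _ hGp hGpb
  · simp only [hLm]
    exact key _ hGm hGmb
end

section
/- Let q ≥ 0. For every φ ∈ L²(ℝ), the functions 𝓛₊[φ] and 𝓛₋[φ] belong to L²(ℝ) and satisfy ‖𝓛₊[φ]‖_{L²} ≤ 3‖φ‖_{L²} and ‖𝓛₋[φ]‖_{L²} ≤ 3‖φ‖_{L²}. -/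
open Complex MeasureTheory

namespace LpmAux

open Set Filter Real
open scoped ENNReal NNReal

/-- The integral-operator part of `Lplus`. -/
noncomputable def T (q : ℝ) (φ : ℝ → ℂ) (x : ℝ) : ℂ :=
  (if x < 0 then (1 : ℂ) else 0) * q * Real.exp (q * x) *
    ∫ y in x..(-x), (Real.exp (q * |y|) : ℂ) * φ y

lemma Lplus_eq (q : ℝ) (φ : ℝ → ℂ) : Lplus q φ = φ - T q φ := rfl

lemma integral_exp_mul {c : ℝ} (hc : c ≠ 0) (a b : ℝ) :
    ∫ y in a..b, Real.exp (c * y) = (Real.exp (c * b) - Real.exp (c * a)) / c := by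
  have hd : ∀ x : ℝ, HasDerivAt (fun y => Real.exp (c * y) / c) (Real.exp (c * x)) x := by
    intro x
    have := (((hasDerivAt_id x).const_mul c).exp).div_const c
    simpa [mul_comm, mul_div_assoc, mul_div_cancel_left₀ _ hc] using this
  rw [intervalIntegral.integral_eq_sub_of_hasDerivAt (fun x _ => hd x)
    ((Real.continuous_exp.comp (continuous_const.mul continuous_id)).intervalIntegrable a b)]
  ring

lemma integrableOn_exp_Iic {q : ℝ} (hq : 0 < q) (c : ℝ) :
    IntegrableOn (fun x => Real.exp (q * x)) (Iic c) := by
  have h1 : IntegrableOn (fun x => Real.exp (-q * x)) (Ici (-c)) :=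
    Iff.mpr integrableOn_Ici_iff_integrableOn_Ioi (exp_neg_integrableOn_Ioi _ hq)
  have A : MeasurableEmbedding (fun x : ℝ => -x) :=
    (Homeomorph.neg ℝ).isClosedEmbedding.measurableEmbedding
  have hmap : volume.restrict (Iic c) =
      Measure.map (fun x : ℝ => -x) (volume.restrict (Ici (-c))) := by
    rw [← Measure.map_neg_eq_self (volume : Measure ℝ),
      Measure.restrict_map A.measurable measurableSet_Iic]
    congr 1
    ext x
    simp
  unfold IntegrableOn
  rw [hmap, A.integrable_map_iff]
  have : ((fun x => Real.exp (q * x)) ∘ fun x : ℝ => -x) = fun x => Real.exp (-q * x) := by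
    funext x; simp [neg_mul, mul_neg]
  rwa [this]

lemma integral_exp_Iic {q : ℝ} (hq : 0 < q) (c : ℝ) :
    ∫ x in Iic c, Real.exp (q * x) = Real.exp (q * c) / q := by
  have hd : ∀ x : ℝ, HasDerivAt (fun y => Real.exp (q * y) / q) (Real.exp (q * x)) x := by
    intro x
    have := (((hasDerivAt_id x).const_mul q).exp).div_const q
    simpa [mul_comm, mul_div_assoc, mul_div_cancel_left₀ _ hq.ne'] using this
  have ht : Tendsto (fun x => Real.exp (q * x) / q) atBot (nhds 0) := by
    have h1 : Tendsto (fun x : ℝ => q * x) atBot atBot :=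
      Tendsto.const_mul_atBot hq tendsto_id
    have := (Real.tendsto_exp_atBot.comp h1).div_const q
    simpa using this
  have := MeasureTheory.integral_Iic_of_hasDerivAt_of_tendsto'
    (fun x _ => hd x) (integrableOn_exp_Iic hq c) ht
  simpa using this

lemma lintegral_exp_Iic {q : ℝ} (hq : 0 < q) (c : ℝ) :
    ∫⁻ x in Iic c, ENNReal.ofReal (Real.exp (q * x)) = ENNReal.ofReal (Real.exp (q * c) / q) := by
  rw [← MeasureTheory.ofReal_integral_eq_lintegral_ofReal (integrableOn_exp_Iic hq c)
      (ae_of_all _ fun x => (Real.exp_pos _).le), integral_exp_Iic hq c]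

lemma intervalIntegrable_phi {φ : ℝ → ℂ} (hφ : MemLp φ 2 (volume : Measure ℝ)) (a b : ℝ) :
    IntervalIntegrable φ volume a b := by
  rw [intervalIntegrable_iff]
  haveI : IsFiniteMeasure (volume.restrict (Set.uIoc a b)) :=
    ⟨by rw [Measure.restrict_apply_univ]; exact measure_Ioc_lt_top⟩
  exact (hφ.restrict _).integrable one_le_two

lemma intervalIntegrable_g (q : ℝ) {φ : ℝ → ℂ} (hφ : MemLp φ 2 (volume : Measure ℝ)) (a b : ℝ) :
    IntervalIntegrable (fun y => (Real.exp (q * |y|) : ℂ) * φ y) volume a b := by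
  apply (intervalIntegrable_phi hφ a b).continuousOn_mul
  exact (Complex.continuous_ofReal.comp
    (Real.continuous_exp.comp (continuous_const.mul _root_.continuous_abs))).continuousOn

lemma T_aesm (q : ℝ) {φ : ℝ → ℂ} (hφ : MemLp φ 2 (volume : Measure ℝ)) :
    AEStronglyMeasurable (T q φ) (volume : Measure ℝ) := by
  set g : ℝ → ℂ := fun y => (Real.exp (q * |y|) : ℂ) * φ y with hg
  have h_int : ∀ a b : ℝ, IntervalIntegrable g volume a b := intervalIntegrable_g q hφ
  set F : ℝ → ℂ := fun t => ∫ y in (0:ℝ)..t, g y with hF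
  have hFc : Continuous F := intervalIntegral.continuous_primitive h_int 0
  have hcont : Continuous (fun x : ℝ => ((q : ℂ) * (Real.exp (q * x) : ℂ)) * (F (-x) - F x)) := by
    apply Continuous.mul
    · exact continuous_const.mul (Complex.continuous_ofReal.comp
        (Real.continuous_exp.comp (continuous_const.mul continuous_id)))
    · exact (hFc.comp continuous_neg).sub hFc
  have hTeq : T q φ =
      (Iio (0:ℝ)).indicator (fun x => ((q : ℂ) * (Real.exp (q * x) : ℂ)) * (F (-x) - F x)) := by
    funext x
    rw [Set.indicator_apply]
    by_cases hx : x < 0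
    · rw [if_pos (mem_Iio.2 hx)]
      have : F (-x) - F x = ∫ y in x..(-x), g y :=
        intervalIntegral.integral_interval_sub_left (h_int 0 (-x)) (h_int 0 x)
      rw [this, T, if_pos hx]
      ring
    · rw [if_neg (by simpa using hx), T, if_neg hx]
      ring
  rw [hTeq]
  exact ((hcont.stronglyMeasurable).indicator measurableSet_Iio).aestronglyMeasurable

lemma integral_exp_abs_Ioc {q : ℝ} (hq : 0 < q) {x : ℝ} (hx : x < 0) :
    ∫ y in Ioc x (-x), Real.exp (q * |y|) = 2 * (Real.exp (-(q * x)) - 1) / q := by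
  have hxx : x ≤ -x := by linarith
  have hcont : Continuous (fun y : ℝ => Real.exp (q * |y|)) :=
    Real.continuous_exp.comp (continuous_const.mul _root_.continuous_abs)
  rw [← intervalIntegral.integral_of_le hxx,
    ← intervalIntegral.integral_add_adjacent_intervals
      (hcont.intervalIntegrable x 0) (hcont.intervalIntegrable 0 (-x))]
  have i1 : ∫ y in x..(0:ℝ), Real.exp (q * |y|) = ∫ y in x..(0:ℝ), Real.exp (-q * y) := by
    apply intervalIntegral.integral_congr
    intro y hy
    rw [Set.uIcc_of_le hx.le] at hy
    show Real.exp (q * |y|) = Real.exp (-q * y)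
    rw [_root_.abs_of_nonpos hy.2]
    ring_nf
  have i2 : ∫ y in (0:ℝ)..(-x), Real.exp (q * |y|) = ∫ y in (0:ℝ)..(-x), Real.exp (q * y) := by
    apply intervalIntegral.integral_congr
    intro y hy
    rw [Set.uIcc_of_le (by linarith : (0:ℝ) ≤ -x)] at hy
    show Real.exp (q * |y|) = Real.exp (q * y)
    rw [_root_.abs_of_nonneg hy.1]
  rw [i1, i2, integral_exp_mul (by linarith : -q ≠ 0), integral_exp_mul hq.ne']
  have : Real.exp (-q * x) = Real.exp (-(q * x)) := by ring_nf
  have h2 : Real.exp (q * -x) = Real.exp (-(q * x)) := by ring_nf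
  rw [this, h2]
  simp only [mul_zero, Real.exp_zero]
  field_simp [hq.ne']
  ring

lemma nφ_ne_top (φ : ℝ → ℂ) (y : ℝ) : ((‖φ y‖₊ : ℝ≥0∞)) ^ (2:ℝ) ≠ ⊤ :=
  ENNReal.rpow_ne_top_of_nonneg (by norm_num) ENNReal.coe_ne_top

lemma T_lintegral {q : ℝ} (hq : 0 < q) {φ : ℝ → ℂ} (hm : Measurable φ)
    :
    ∫⁻ x, (‖T q φ x‖₊ : ℝ≥0∞) ^ (2:ℝ) ≤ 2 * ∫⁻ y, (‖φ y‖₊ : ℝ≥0∞) ^ (2:ℝ) := by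
  set a : ℝ → ℝ≥0∞ := fun y => ENNReal.ofReal (Real.exp (q * |y|)) with ha
  set nφ : ℝ → ℝ≥0∞ := fun y => (‖φ y‖₊ : ℝ≥0∞) ^ (2:ℝ) with hnφ
  have ha_m : Measurable a :=
    ENNReal.measurable_ofReal.comp
      (Real.measurable_exp.comp (continuous_const.mul _root_.continuous_abs).measurable)
  have hnφ_m : Measurable nφ :=
    ENNReal.continuous_rpow_const.measurable.comp
      (measurable_coe_nnreal_ennreal.comp hm.nnnorm)
  have hA0 : ∀ y, a y ≠ 0 := fun y => (ENNReal.ofReal_pos.2 (Real.exp_pos _)).ne'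
  have hAt : ∀ y, a y ≠ ⊤ := fun _ => ENNReal.ofReal_ne_top
  set S : Set (ℝ × ℝ) := {p : ℝ × ℝ | p.1 < p.2 ∧ p.2 ≤ -p.1} with hS
  have hS_m : MeasurableSet S :=
    (measurableSet_lt measurable_fst measurable_snd).inter
      (measurableSet_le measurable_snd measurable_fst.neg)
  set H : ℝ → ℝ → ℝ≥0∞ := fun x y =>
    ENNReal.ofReal (2 * q * Real.exp (q * x)) * S.indicator 1 (x, y) * (a y * nφ y) with hH
  have hH_m : Measurable (Function.uncurry H) := by
    apply Measurable.mul
    apply Measurable.mul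
    · exact ENNReal.measurable_ofReal.comp
        ((Real.measurable_exp.comp (measurable_fst.const_mul q)).const_mul (2 * q))
    · exact measurable_one.indicator hS_m
    · exact (ha_m.mul hnφ_m).comp measurable_snd
  -- the exponent-2 arithmetic helper
  have hgnorm : ∀ y : ℝ, (‖(Real.exp (q * |y|) : ℂ) * φ y‖₊ : ℝ≥0∞) = a y * (‖φ y‖₊ : ℝ≥0∞) := by
    intro y
    rw [nnnorm_mul, ENNReal.coe_mul, Complex.nnnorm_real,
      ← enorm_eq_nnnorm, Real.enorm_eq_ofReal (Real.exp_pos _).le]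
  have step1 : ∀ x : ℝ, (‖T q φ x‖₊ : ℝ≥0∞) ^ (2:ℝ) ≤ ∫⁻ y, H x y := by
    intro x
    by_cases hx : x < 0
    · have hxx : x ≤ -x := by linarith
      have hinner : ∫⁻ y, H x y
          = ENNReal.ofReal (2 * q * Real.exp (q * x)) * ∫⁻ y in Set.Ioc x (-x), a y * nφ y := by
        have hcg : ∀ y, H x y = ENNReal.ofReal (2 * q * Real.exp (q * x)) *
            (Set.Ioc x (-x)).indicator (fun y => a y * nφ y) y := by
          intro y
          by_cases hy : y ∈ Set.Ioc x (-x)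
          · have hmem : (x, y) ∈ S := ⟨hy.1, hy.2⟩
            rw [hH]
            simp [Set.indicator_of_mem hy, Set.indicator_of_mem hmem]
          · have hnmem : (x, y) ∉ S := fun h => hy ⟨h.1, h.2⟩
            simp [hH, Set.indicator_of_notMem hy, Set.indicator_of_notMem hnmem]
        rw [lintegral_congr hcg, lintegral_const_mul' _ _ ENNReal.ofReal_ne_top,
          lintegral_indicator measurableSet_Ioc _]
      set I : ℂ := ∫ y in Set.Ioc x (-x), (Real.exp (q * |y|) : ℂ) * φ y with hI
      have hT : T q φ x = ((q * Real.exp (q * x) : ℝ) : ℂ) * I := by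
        rw [T, if_pos hx, intervalIntegral.integral_of_le hxx, hI]
        push_cast
        ring
      have hTn : (‖T q φ x‖₊ : ℝ≥0∞) = ENNReal.ofReal (q * Real.exp (q * x)) * (‖I‖₊ : ℝ≥0∞) := by
        rw [hT, nnnorm_mul, ENNReal.coe_mul, Complex.nnnorm_real,
          ← enorm_eq_nnnorm, Real.enorm_eq_ofReal (by positivity)]
      set f₁ : ℝ → ℝ≥0∞ := fun y => a y ^ (2⁻¹:ℝ) with hf₁
      set f₂ : ℝ → ℝ≥0∞ := fun y => f₁ y * (‖φ y‖₊ : ℝ≥0∞) with hf₂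
      have hf₁_m : Measurable f₁ := ENNReal.continuous_rpow_const.measurable.comp ha_m
      have hf₂_m : Measurable f₂ :=
        hf₁_m.mul (measurable_coe_nnreal_ennreal.comp hm.nnnorm)
      have hsq : ∀ y, f₁ y * f₁ y = a y := by
        intro y
        rw [hf₁, ← ENNReal.rpow_add _ _ (hA0 y) (hAt y)]
        norm_num
      have hIa : (‖I‖₊ : ℝ≥0∞) ≤ ∫⁻ y in Set.Ioc x (-x), (f₁ * f₂) y := by
        refine le_trans (enorm_integral_le_lintegral_enorm _) (le_of_eq (lintegral_congr ?_))
        intro y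
        rw [enorm_eq_nnnorm, hgnorm y, Pi.mul_apply, hf₂, ← mul_assoc, hsq y]
      have h22 : Real.HolderConjugate 2 2 := Real.holderConjugate_iff.mpr ⟨one_lt_two, by norm_num⟩
      have hold := ENNReal.lintegral_mul_le_Lp_mul_Lq (volume.restrict (Set.Ioc x (-x))) h22
        hf₁_m.aemeasurable hf₂_m.aemeasurable
      have hf1sq : ∀ y, f₁ y ^ (2:ℝ) = a y := by
        intro y
        rw [hf₁, ← ENNReal.rpow_mul]
        norm_num
      have hf2sq : ∀ y, f₂ y ^ (2:ℝ) = a y * nφ y := by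
        intro y
        rw [hf₂, ENNReal.mul_rpow_of_nonneg _ _ (by norm_num : (0:ℝ) ≤ 2), hf1sq y, hnφ]
      have hAbound : ∫⁻ y in Set.Ioc x (-x), f₁ y ^ (2:ℝ)
          ≤ ENNReal.ofReal (2 * Real.exp (-(q * x)) / q) := by
        rw [lintegral_congr hf1sq]
        have hcont : Continuous fun y : ℝ => Real.exp (q * |y|) :=
          Real.continuous_exp.comp (continuous_const.mul _root_.continuous_abs)
        have hval : ∫⁻ y in Set.Ioc x (-x), a y
            = ENNReal.ofReal (2 * (Real.exp (-(q * x)) - 1) / q) := by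
          rw [ha, ← MeasureTheory.ofReal_integral_eq_lintegral_ofReal
            (hcont.integrableOn_Ioc) (ae_of_all _ fun y => (Real.exp_pos _).le),
            integral_exp_abs_Ioc hq hx]
        rw [hval]
        apply ENNReal.ofReal_le_ofReal
        gcongr
        linarith [Real.exp_pos (-(q * x))]
      have hkey : ENNReal.ofReal (q * Real.exp (q * x)) ^ (2:ℝ) *
          ENNReal.ofReal (2 * Real.exp (-(q * x)) / q)
          = ENNReal.ofReal (2 * q * Real.exp (q * x)) := by
        rw [ENNReal.ofReal_rpow_of_nonneg (by positivity) (by norm_num),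
          ← ENNReal.ofReal_mul (by positivity)]
        congr 1
        have h1 : Real.exp (q * x) * Real.exp (-(q * x)) = 1 := by
          rw [← Real.exp_add]; simp
        rw [show ((2:ℝ)) = ((2:ℕ):ℝ) by norm_num, Real.rpow_natCast]
        field_simp
        nlinarith [h1, Real.exp_pos (q * x)]
      calc (‖T q φ x‖₊ : ℝ≥0∞) ^ (2:ℝ)
          = ENNReal.ofReal (q * Real.exp (q * x)) ^ (2:ℝ) * ((‖I‖₊ : ℝ≥0∞)) ^ (2:ℝ) := by
            rw [hTn, ENNReal.mul_rpow_of_nonneg _ _ (by norm_num : (0:ℝ) ≤ 2)]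
        _ ≤ ENNReal.ofReal (q * Real.exp (q * x)) ^ (2:ℝ) *
            ((∫⁻ y in Set.Ioc x (-x), f₁ y ^ (2:ℝ)) ^ (1/2:ℝ) *
             (∫⁻ y in Set.Ioc x (-x), f₂ y ^ (2:ℝ)) ^ (1/2:ℝ)) ^ (2:ℝ) := by
            gcongr
            exact le_trans hIa hold
        _ = ENNReal.ofReal (q * Real.exp (q * x)) ^ (2:ℝ) *
            ((∫⁻ y in Set.Ioc x (-x), f₁ y ^ (2:ℝ)) *
             (∫⁻ y in Set.Ioc x (-x), f₂ y ^ (2:ℝ))) := by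
            rw [ENNReal.mul_rpow_of_nonneg _ _ (by norm_num : (0:ℝ) ≤ 2),
              ← ENNReal.rpow_mul, ← ENNReal.rpow_mul]
            norm_num
        _ ≤ ENNReal.ofReal (q * Real.exp (q * x)) ^ (2:ℝ) *
            (ENNReal.ofReal (2 * Real.exp (-(q * x)) / q) *
             (∫⁻ y in Set.Ioc x (-x), f₂ y ^ (2:ℝ))) := by
            gcongr
        _ = ENNReal.ofReal (2 * q * Real.exp (q * x)) *
            ∫⁻ y in Set.Ioc x (-x), a y * nφ y := by
            rw [← mul_assoc, hkey, lintegral_congr hf2sq]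
        _ = ∫⁻ y, H x y := hinner.symm
    · have hT0 : T q φ x = 0 := by rw [T, if_neg hx]; ring
      rw [hT0]
      simp [ENNReal.zero_rpow_of_pos (by norm_num : (0:ℝ) < 2)]
  have step3 : ∀ y : ℝ, ∫⁻ x, H x y ≤ 2 * nφ y := by
    intro y
    have hpt : ∀ x, H x y ≤ (a y * nφ y) *
        (Set.Iic (-|y|)).indicator (fun x => ENNReal.ofReal (2 * q * Real.exp (q * x))) x := by
      intro x
      by_cases hxy : (x, y) ∈ S
      · have hx' : x ≤ -|y| := by
          obtain ⟨h1, h2⟩ := hxy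
          rcases le_or_gt 0 y with h | h
          · rw [_root_.abs_of_nonneg h]; dsimp only at h1 h2; linarith
          · rw [_root_.abs_of_neg h]; dsimp only at h1 h2; linarith
        rw [hH]
        simp only [Set.indicator_of_mem hxy, Set.indicator_of_mem (Set.mem_Iic.2 hx'),
          Pi.one_apply, mul_one]
        exact le_of_eq (mul_comm _ _)
      · simp [hH, Set.indicator_of_notMem hxy]
    calc ∫⁻ x, H x y
        ≤ ∫⁻ x, (a y * nφ y) * (Set.Iic (-|y|)).indicator
            (fun x => ENNReal.ofReal (2 * q * Real.exp (q * x))) x := lintegral_mono hpt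
      _ = (a y * nφ y) * ∫⁻ x in Set.Iic (-|y|), ENNReal.ofReal (2 * q * Real.exp (q * x)) := by
          rw [lintegral_const_mul' _ _ (ENNReal.mul_ne_top (hAt y) (nφ_ne_top φ y)),
            lintegral_indicator measurableSet_Iic _]
      _ = (a y * nφ y) * (ENNReal.ofReal (2 * q) * ENNReal.ofReal (Real.exp (q * -|y|) / q)) := by
          congr 1
          rw [← lintegral_exp_Iic hq (-|y|), ← lintegral_const_mul' _ _
            (ENNReal.ofReal_ne_top (r := 2 * q))]
          apply lintegral_congr
          intro x
          rw [← ENNReal.ofReal_mul (by positivity), mul_assoc]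
      _ = 2 * nφ y := by
          have hnum : a y * (ENNReal.ofReal (2 * q) * ENNReal.ofReal (Real.exp (q * -|y|) / q))
              = 2 := by
            simp only [ha]
            rw [← mul_assoc, ← ENNReal.ofReal_mul (Real.exp_pos _).le,
              ← ENNReal.ofReal_mul (by positivity)]
            rw [show ((2:ℝ≥0∞)) = ENNReal.ofReal 2 by norm_num]
            congr 1
            have h1 : Real.exp (q * |y|) * Real.exp (-(q * |y|)) = 1 := by
              rw [← Real.exp_add]; simp
            field_simp
            linear_combination h1
          calc (a y * nφ y) * (ENNReal.ofReal (2 * q) * ENNReal.ofReal (Real.exp (q * -|y|) / q))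
              = (a y * (ENNReal.ofReal (2 * q) * ENNReal.ofReal (Real.exp (q * -|y|) / q))) *
                nφ y := by ring
            _ = 2 * nφ y := by rw [hnum]
  calc ∫⁻ x, (‖T q φ x‖₊ : ℝ≥0∞) ^ (2:ℝ)
      ≤ ∫⁻ x, ∫⁻ y, H x y := lintegral_mono step1
    _ = ∫⁻ y, ∫⁻ x, H x y := lintegral_lintegral_swap hH_m.aemeasurable
    _ ≤ ∫⁻ y, 2 * nφ y := lintegral_mono step3
    _ = 2 * ∫⁻ y, nφ y := lintegral_const_mul' _ _ (by norm_num)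

lemma T_eLpNorm {q : ℝ} (hq : 0 < q) {φ : ℝ → ℂ} (hm : Measurable φ) :
    eLpNorm (T q φ) 2 volume ≤ 2 * eLpNorm φ 2 volume := by
  rw [eLpNorm_eq_lintegral_rpow_enorm_toReal two_ne_zero ENNReal.ofNat_ne_top,
    eLpNorm_eq_lintegral_rpow_enorm_toReal two_ne_zero ENNReal.ofNat_ne_top]
  have h2 : ((2:ℝ≥0∞)).toReal = (2:ℝ) := by simp
  rw [h2]
  have h4 : ((4:ℝ≥0∞)) ^ (1/(2:ℝ)) = 2 := by
    rw [show (4:ℝ≥0∞) = 2 ^ (2:ℕ) by norm_num, ← ENNReal.rpow_natCast, ← ENNReal.rpow_mul]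
    norm_num
  calc (∫⁻ x, (‖T q φ x‖₊ : ℝ≥0∞) ^ (2:ℝ)) ^ (1/(2:ℝ))
      ≤ (2 * ∫⁻ y, (‖φ y‖₊ : ℝ≥0∞) ^ (2:ℝ)) ^ (1/(2:ℝ)) :=
        ENNReal.rpow_le_rpow (T_lintegral hq hm) (by norm_num)
    _ ≤ (4 * ∫⁻ y, (‖φ y‖₊ : ℝ≥0∞) ^ (2:ℝ)) ^ (1/(2:ℝ)) := by
        gcongr
        norm_num
    _ = 2 * (∫⁻ y, (‖φ y‖₊ : ℝ≥0∞) ^ (2:ℝ)) ^ (1/(2:ℝ)) := by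
        rw [ENNReal.mul_rpow_of_nonneg _ _ (by norm_num : (0:ℝ) ≤ 1/2), h4]

lemma lplus_main (q : ℝ) (hq : 0 ≤ q) (φ : ℝ → ℂ) (hφ : MemLp φ 2 (volume : Measure ℝ)) :
    MemLp (Lplus q φ) 2 (volume : Measure ℝ) ∧
    eLpNorm (Lplus q φ) 2 volume ≤ 3 * eLpNorm φ 2 volume := by
  rcases hq.eq_or_lt with rfl | hq
  · have hL : Lplus 0 φ = φ := by
      funext x
      simp [Lplus]
    rw [hL]
    exact ⟨hφ, le_mul_of_one_le_left (zero_le) (by norm_num)⟩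
  · obtain ⟨ψ, hψm, hψeq⟩ := hφ.1.aemeasurable
    have hψ : MemLp ψ 2 volume := hφ.ae_eq hψeq
    have hTeq : T q φ = T q ψ := by
      funext x
      unfold T
      congr 1
      apply intervalIntegral.integral_congr_ae
      filter_upwards [hψeq] with y hy _
      rw [hy]
    have haem : Lplus q φ =ᵐ[volume] Lplus q ψ := by
      filter_upwards [hψeq] with x hx
      simp only [Lplus_eq, Pi.sub_apply, hTeq, hx]
    have hTm : AEStronglyMeasurable (T q ψ) volume := T_aesm q hψ
    have hTb : eLpNorm (T q ψ) 2 volume ≤ 2 * eLpNorm ψ 2 volume := T_eLpNorm hq hψm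
    have hTmem : MemLp (T q ψ) 2 volume := by
      refine ⟨hTm, lt_of_le_of_lt hTb ?_⟩
      exact ENNReal.mul_lt_top (by norm_num) hψ.2
    have hmem : MemLp (Lplus q ψ) 2 volume := by
      rw [Lplus_eq]
      exact hψ.sub hTmem
    have hbound : eLpNorm (Lplus q ψ) 2 volume ≤ 3 * eLpNorm ψ 2 volume := by
      rw [Lplus_eq]
      calc eLpNorm (ψ - T q ψ) 2 volume
          ≤ eLpNorm ψ 2 volume + eLpNorm (T q ψ) 2 volume :=
            eLpNorm_sub_le hψ.1 hTm one_le_two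
        _ ≤ eLpNorm ψ 2 volume + 2 * eLpNorm ψ 2 volume := by gcongr
        _ = 3 * eLpNorm ψ 2 volume := by ring
    have heq2 : eLpNorm φ 2 volume = eLpNorm ψ 2 volume := eLpNorm_congr_ae hψeq
    refine ⟨hmem.ae_eq haem.symm, ?_⟩
    rw [eLpNorm_congr_ae haem, heq2]
    exact hbound

end LpmAux

theorem Lpm_L2_bound (q : ℝ) (hq : 0 ≤ q) (φ : ℝ → ℂ) (hφ : MemLp φ 2 (volume : Measure ℝ)) :
    MemLp (Lplus q φ) 2 (volume : Measure ℝ) ∧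
    MemLp (Lminus q φ) 2 (volume : Measure ℝ) ∧
    eLpNorm (Lplus q φ) 2 volume ≤ 3 * eLpNorm φ 2 volume ∧
    eLpNorm (Lminus q φ) 2 volume ≤ 3 * eLpNorm φ 2 volume := by
  obtain ⟨hp_mem, hp_bd⟩ := LpmAux.lplus_main q hq φ hφ
  have hneg : MeasurePreserving (fun x : ℝ => -x) volume volume :=
    Measure.measurePreserving_neg _
  set ψ : ℝ → ℂ := fun y => φ (-y) with hψdef
  have hψ : MemLp ψ 2 (volume : Measure ℝ) := hφ.comp_measurePreserving hneg
  obtain ⟨hm_mem, hm_bd⟩ := LpmAux.lplus_main q hq ψ hψ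
  have hid : Lminus q φ = (Lplus q ψ) ∘ (fun x : ℝ => -x) := by
    funext x
    simp only [Function.comp_apply, Lminus, Lplus]
    have hint : (∫ y in (-x)..(-(-x)), (Real.exp (q * |y|) : ℂ) * ψ y)
        = ∫ y in (-x)..x, (Real.exp (q * |y|) : ℂ) * φ y := by
      rw [neg_neg]
      have : (fun y => (Real.exp (q * |y|) : ℂ) * ψ y)
          = fun y => (fun t => (Real.exp (q * |t|) : ℂ) * φ t) (-y) := by
        funext y
        simp [hψdef, abs_neg]
      rw [this, intervalIntegral.integral_comp_neg (fun t => (Real.exp (q * |t|) : ℂ) * φ t)]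
      simp
    have hψx : ψ (-x) = φ x := by simp [hψdef]
    have hexp : Real.exp (q * -x) = Real.exp (-(q * x)) := by ring_nf
    rcases eq_or_ne x 0 with rfl | hx0
    · simp [hψdef]
    · have hif : (if 0 ≤ x then (1:ℂ) else 0) = (if -x < 0 then 1 else 0) := by
        rcases lt_or_gt_of_ne hx0 with h | h
        · rw [if_neg (not_le.2 h), if_neg (by simp [not_lt]; linarith)]
        · rw [if_pos h.le, if_pos (by linarith)]
      rw [hψx, hint, hexp, hif]
  have hmemM : MemLp (Lminus q φ) 2 (volume : Measure ℝ) := by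
    rw [hid]
    exact hm_mem.comp_measurePreserving hneg
  have hbdM : eLpNorm (Lminus q φ) 2 volume ≤ 3 * eLpNorm φ 2 volume := by
    rw [hid, MeasureTheory.eLpNorm_comp_measurePreserving hm_mem.1 hneg]
    refine le_trans hm_bd (le_of_eq ?_)
    congr 1
    exact MeasureTheory.eLpNorm_comp_measurePreserving hφ.1 hneg
  exact ⟨hp_mem, hmemM, hp_bd, hbdM⟩
end

section
/- Let q > 0 and φ ∈ L¹(ℝ). Then for every ξ ≥ 0: 𝓕[𝓛₊φ](ξ) = 𝓕[φ](ξ) + r_q(ξ)·𝓕[1₊φ](−ξ) + r_q(ξ)·𝓕[1₋φ](ξ), and for every ξ < 0: 𝓕[𝓛₋φ](ξ) = 𝓕[φ](ξ) + conj(r_q(ξ))·𝓕[1₋φ](−ξ) + conj(r_q(ξ))·𝓕[1₊φ](ξ). In other words, the two representations of the distorted Fourier transform 𝓕_q coincide. -/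
open Complex MeasureTheory Real Set Filter

/-- Reflection coefficient `r_q(ξ) = q/(iξ − q)`. -/
noncomputable def reflCoeff (q ξ : ℝ) : ℂ := (q : ℂ) / (I * ξ - q)

/-- The Fourier transform `𝓕[φ](ξ) = (2π)^{−1/2} ∫ e^{−iyξ} φ(y) dy`. -/
noncomputable def FT (φ : ℝ → ℂ) (ξ : ℝ) : ℂ :=
  ((Real.sqrt (2 * π) : ℂ))⁻¹ * ∫ y : ℝ, Complex.exp (-(I * y * ξ)) * φ y

/-- Indicator of `[0,∞)` times `φ`. -/
noncomputable def posPart (φ : ℝ → ℂ) (x : ℝ) : ℂ := if 0 ≤ x then φ x else 0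

/-- Indicator of `(−∞,0)` times `φ`. -/
noncomputable def negPart (φ : ℝ → ℂ) (x : ℝ) : ℂ := if x < 0 then φ x else 0

section aux

lemma norm_cexp_real_mul (a : ℂ) (x : ℝ) : ‖Complex.exp (a * x)‖ = Real.exp (a.re * x) := by
  rw [Complex.norm_exp]
  congr 1
  simp [Complex.mul_re]

lemma norm_cexp_unit (x c : ℝ) : ‖Complex.exp (-(I * x * c))‖ = 1 := by
  rw [Complex.norm_exp]
  simp [Complex.mul_re]

lemma integrableOn_exp_mul_Iic' {b : ℝ} (hb : 0 < b) (c : ℝ) :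
    IntegrableOn (fun x : ℝ => Real.exp (b * x)) (Iic c) := by
  have h : IntegrableOn (fun x : ℝ => Real.exp (-b * x)) (Ioi (-c)) :=
    exp_neg_integrableOn_Ioi _ hb
  have h2 := ((Measure.measurePreserving_neg (volume : Measure ℝ)).integrableOn_comp_preimage
      (Homeomorph.neg ℝ).measurableEmbedding).2 h
  have h3 : IntegrableOn (fun x : ℝ => Real.exp (b * x)) (Iio c) := by
    have hs : (Neg.neg ⁻¹' (Ioi (-c)) : Set ℝ) = Iio c := by
      ext x; simp [neg_lt]
    have : ((fun x => rexp (-b * x)) ∘ (Neg.neg : ℝ → ℝ)) = fun x : ℝ => Real.exp (b * x) := by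
      funext x; simp [Function.comp]
    rw [this, hs] at h2
    exact h2
  exact h3.congr_set_ae Iio_ae_eq_Iic.symm

lemma integral_exp_mul_Iic' {b : ℝ} (hb : 0 < b) (c : ℝ) :
    ∫ x in Iic c, Real.exp (b * x) = Real.exp (b * c) / b := by
  have hderiv : ∀ x ∈ Iic c, HasDerivAt (fun x : ℝ => Real.exp (b * x) / b)
      (Real.exp (b * x)) x := by
    intro x _
    have h1 : HasDerivAt (fun x : ℝ => b * x) b x := by
      simpa using (hasDerivAt_id x).const_mul b
    have := (Real.hasDerivAt_exp (b * x)).comp x h1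
    have h2 := this.div_const b
    simpa [mul_comm, mul_div_assoc, mul_div_cancel_left₀ _ hb.ne'] using h2
  have htend : Tendsto (fun x : ℝ => Real.exp (b * x) / b) atBot (nhds 0) := by
    have h1 : Tendsto (fun x : ℝ => b * x) atBot atBot :=
      Tendsto.const_mul_atBot hb tendsto_id
    simpa using (Real.tendsto_exp_atBot.comp h1).div_const b
  have := integral_Iic_of_hasDerivAt_of_tendsto' hderiv (integrableOn_exp_mul_Iic' hb c) htend
  simpa using this

lemma integrableOn_cexp_mul_Iic {a : ℂ} (ha : 0 < a.re) (c : ℝ) :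
    IntegrableOn (fun x : ℝ => Complex.exp (a * x)) (Iic c) := by
  refine (integrableOn_exp_mul_Iic' ha c).integrable.mono' ?_ ?_
  · exact (Complex.continuous_exp.comp
      (continuous_const.mul Complex.continuous_ofReal)).aestronglyMeasurable
  · exact ae_of_all _ fun x => le_of_eq (norm_cexp_real_mul a x)

lemma integral_cexp_mul_Iic {a : ℂ} (ha : 0 < a.re) (c : ℝ) :
    ∫ x in Iic c, Complex.exp (a * x) = Complex.exp (a * c) / a := by
  have hane : a ≠ 0 := fun h => by simp [h] at ha
  have hderiv : ∀ x ∈ Iic c, HasDerivAt (fun x : ℝ => Complex.exp (a * x) / a)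
      (Complex.exp (a * x)) x := by
    intro x _
    have h1 : HasDerivAt (fun z : ℂ => Complex.exp (a * z) / a)
        (Complex.exp (a * (x : ℂ))) (x : ℂ) := by
      have h0 : HasDerivAt (fun z : ℂ => a * z) a (x : ℂ) := by
        simpa using (hasDerivAt_id (x : ℂ)).const_mul a
      have := (Complex.hasDerivAt_exp (a * (x : ℂ))).comp (x : ℂ) h0
      have h2 := this.div_const a
      simpa [mul_comm, mul_div_assoc, mul_div_cancel_left₀ _ hane] using h2
    exact h1.comp_ofReal
  have htend : Tendsto (fun x : ℝ => Complex.exp (a * x) / a) atBot (nhds 0) := by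
    rw [tendsto_zero_iff_norm_tendsto_zero]
    have heq : (fun x : ℝ => ‖Complex.exp (a * x) / a‖)
        = fun x => Real.exp (a.re * x) / ‖a‖ := by
      funext x; rw [norm_div, norm_cexp_real_mul]
    rw [heq]
    have h1 : Tendsto (fun x : ℝ => a.re * x) atBot atBot :=
      Tendsto.const_mul_atBot ha tendsto_id
    simpa using (Real.tendsto_exp_atBot.comp h1).div_const ‖a‖
  have := integral_Iic_of_hasDerivAt_of_tendsto' hderiv (integrableOn_cexp_mul_Iic ha c) htend
  simpa using this

end aux

lemma keyPlus (q : ℝ) (hq : 0 < q) (φ : ℝ → ℂ) (hφ : Integrable φ) (ξ : ℝ) (hξ : 0 ≤ ξ) :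
    FT (Lplus q φ) ξ
      = FT φ ξ + reflCoeff q ξ * FT (posPart φ) (-ξ)
        + reflCoeff q ξ * FT (negPart φ) ξ := by
  set a : ℂ := (q : ℂ) - I * ξ with ha_def
  have hare : a.re = q := by simp [ha_def]
  have ha : 0 < a.re := by rwa [hare]
  have hane : a ≠ 0 := fun h => by rw [h] at ha; simp at ha
  set S : Set (ℝ × ℝ) := {p | p.1 < p.2 ∧ p.2 ≤ -p.1} with hS_def
  have hS : MeasurableSet S := by
    apply MeasurableSet.inter
    · exact measurableSet_lt measurable_fst measurable_snd
    · exact measurableSet_le measurable_snd measurable_fst.neg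
  set F : ℝ × ℝ → ℂ := fun p =>
    S.indicator (fun p => Complex.exp (a * p.1) * ((Real.exp (q * |p.2|) : ℂ) * φ p.2)) p
    with hF_def
  set T : ℝ → Set ℝ := fun y => if 0 < y then Iic (-y) else Iio y with hT_def
  have hT : ∀ y, MeasurableSet (T y) := by
    intro y; simp only [hT_def]
    split
    · exact measurableSet_Iic
    · exact measurableSet_Iio
  have hmemT : ∀ x y : ℝ, (x < y ∧ y ≤ -x) ↔ x ∈ T y := by
    intro x y
    simp only [hT_def]
    by_cases hy : 0 < y
    · simp only [if_pos hy, mem_Iic]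
      constructor
      · rintro ⟨_, h2⟩; linarith
      · intro h; constructor <;> linarith
    · push_neg at hy
      simp only [if_neg (not_lt.2 hy), mem_Iio]
      constructor
      · rintro ⟨h1, _⟩; exact h1
      · intro h; constructor <;> linarith
  have hsec : ∀ x y : ℝ, F (x, y)
      = (T y).indicator (fun x => Complex.exp (a * x)) x * ((Real.exp (q * |y|) : ℂ) * φ y) := by
    intro x y
    by_cases hxy : x < y ∧ y ≤ -x
    · simp only [hF_def]
      rw [indicator_of_mem (by exact hxy : (x, y) ∈ S),
        indicator_of_mem ((hmemT x y).1 hxy)]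
    · simp only [hF_def]
      rw [indicator_of_notMem (by exact hxy : (x, y) ∉ S),
        indicator_of_notMem (fun h => hxy ((hmemT x y).2 h)), zero_mul]
  have hTint : ∀ y, IntegrableOn (fun x : ℝ => Complex.exp (a * x)) (T y) := by
    intro y; simp only [hT_def]
    split
    · exact integrableOn_cexp_mul_Iic ha _
    · exact (integrableOn_cexp_mul_Iic ha y).mono_set Iio_subset_Iic_self
  have hTval : ∀ y, ∫ x in T y, Complex.exp (a * x) = Complex.exp (a * (-|y| : ℝ)) / a := by
    intro y; simp only [hT_def]
    by_cases hy : 0 < y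
    · rw [if_pos hy, integral_cexp_mul_Iic ha, abs_of_pos hy]
    · rw [if_neg hy, setIntegral_congr_set Iio_ae_eq_Iic, integral_cexp_mul_Iic ha,
        abs_of_nonpos (not_lt.1 hy), neg_neg]
  have hTvalR : ∀ y, ∫ x in T y, Real.exp (q * x) = Real.exp (q * (-|y|)) / q := by
    intro y; simp only [hT_def]
    by_cases hy : 0 < y
    · rw [if_pos hy, integral_exp_mul_Iic' hq]
      rw [abs_of_pos hy]
    · rw [if_neg hy, setIntegral_congr_set Iio_ae_eq_Iic, integral_exp_mul_Iic' hq,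
        abs_of_nonpos (not_lt.1 hy), neg_neg]
  have hsecint : ∀ y, Integrable (fun x => F (x, y)) := by
    intro y
    simp only [hsec]
    exact ((integrable_indicator_iff (hT y)).2 (hTint y)).mul_const _
  have hsecval : ∀ y, ∫ x, F (x, y) = Complex.exp (I * ξ * |y|) * φ y / a := by
    intro y
    simp only [hsec]
    rw [integral_mul_const, integral_indicator (hT y), hTval y]
    rw [div_mul_eq_mul_div]
    congr 1
    have h1 : Complex.exp (a * (-|y| : ℝ)) * (Real.exp (q * |y|) : ℂ)
        = Complex.exp (I * ξ * |y|) := by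
      rw [Complex.ofReal_exp, ← Complex.exp_add]
      congr 1
      rw [ha_def]; push_cast; ring
    rw [← mul_assoc, h1]
  have hnormF : ∀ y, (∫ x, ‖F (x, y)‖) = ‖φ y‖ * q⁻¹ := by
    intro y
    have heq : ∀ x, ‖F (x, y)‖
        = (T y).indicator (fun x => Real.exp (q * x)) x * (Real.exp (q * |y|) * ‖φ y‖) := by
      intro x
      rw [hsec x y, norm_mul, norm_indicator_eq_indicator_norm]
      congr 1
      · congr 1; funext z; rw [norm_cexp_real_mul, hare]
      · rw [norm_mul, Complex.norm_real, Real.norm_eq_abs, abs_of_pos (Real.exp_pos _)]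
    simp only [heq]
    rw [integral_mul_const, integral_indicator (hT y), hTvalR y]
    have h2 : rexp (q * -|y|) * (rexp (q * |y|) * ‖φ y‖) = ‖φ y‖ := by
      rw [← mul_assoc, ← Real.exp_add, show q * -|y| + q * |y| = 0 by ring, Real.exp_zero, one_mul]
    rw [div_mul_eq_mul_div, h2, div_eq_mul_inv]
  
  have hmeasF : AEStronglyMeasurable F ((volume : Measure ℝ).prod volume) := by
    apply AEStronglyMeasurable.indicator _ hS
    apply AEStronglyMeasurable.mul
    · exact (Complex.continuous_exp.comp
        (continuous_const.mul (Complex.continuous_ofReal.comp continuous_fst))).aestronglyMeasurable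
    · exact ((Complex.continuous_ofReal.comp (Real.continuous_exp.comp
        (continuous_const.mul (_root_.continuous_abs.comp
          continuous_snd)))).aestronglyMeasurable).mul hφ.1.comp_snd
  have hF : Integrable F ((volume : Measure ℝ).prod volume) := by
    refine (integrable_prod_iff' hmeasF).2 ⟨ae_of_all _ hsecint, ?_⟩
    exact (hφ.norm.mul_const q⁻¹).congr (ae_of_all _ fun y => (hnormF y).symm)
  have hswap : ∫ x : ℝ, ∫ y : ℝ, F (x, y) = ∫ y : ℝ, ∫ x : ℝ, F (x, y) :=
    integral_integral_swap hF
  have hxsec : ∀ x : ℝ, ∫ y, F (x, y)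
      = (if x < 0 then (1 : ℂ) else 0) * Complex.exp (a * x)
        * ∫ y in x..(-x), (Real.exp (q * |y|) : ℂ) * φ y := by
    intro x
    by_cases hx : x < 0
    · have hIoc : ∀ y : ℝ, F (x, y)
          = Complex.exp (a * x)
            * (Ioc x (-x)).indicator (fun y => (Real.exp (q * |y|) : ℂ) * φ y) y := by
        intro y
        have hmem : (x, y) ∈ S ↔ y ∈ Ioc x (-x) := by
          simp [hS_def, mem_Ioc]
        by_cases hy : y ∈ Ioc x (-x)
        · rw [indicator_of_mem hy]
          simp only [hF_def]
          rw [indicator_of_mem (hmem.2 hy)]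
        · rw [indicator_of_notMem hy, mul_zero]
          simp only [hF_def]
          rw [indicator_of_notMem (fun h => hy (hmem.1 h))]
      simp only [hIoc]
      rw [integral_const_mul, if_pos hx, one_mul,
        intervalIntegral.integral_of_le (by linarith : x ≤ -x),
        ← integral_indicator measurableSet_Ioc]
    · have hzero : ∀ y : ℝ, F (x, y) = 0 := by
        intro y
        simp only [hF_def]
        apply indicator_of_notMem
        rintro ⟨h1, h2⟩
        push_neg at hx
        simp only at h1 h2
        linarith
      simp only [hzero, integral_zero, if_neg hx, zero_mul]
  have h1 : Integrable (fun x : ℝ => Complex.exp (-(I * x * ξ)) * φ x) := by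
    refine hφ.bdd_mul (c := 1) ?_ (ae_of_all _ fun x => le_of_eq (norm_cexp_unit x ξ))
    exact (Complex.continuous_exp.comp (((continuous_const.mul
      Complex.continuous_ofReal).mul continuous_const).neg)).aestronglyMeasurable
  have h2 : Integrable (fun x : ℝ => (q : ℂ) * ∫ y, F (x, y)) :=
    (hF.integral_prod_left).const_mul _
  have hGF : ∀ x : ℝ, Complex.exp (-(I * x * ξ)) * Lplus q φ x
      = Complex.exp (-(I * x * ξ)) * φ x - (q : ℂ) * ∫ y, F (x, y) := by
    intro x
    simp only [Lplus]
    rw [mul_sub, hxsec x]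
    congr 1
    have hexp : Complex.exp (-(I * x * ξ)) * (Real.exp (q * x) : ℂ) = Complex.exp (a * x) := by
      rw [Complex.ofReal_exp, ← Complex.exp_add]
      congr 1
      rw [ha_def]; push_cast; ring
    by_cases hx : x < 0
    · simp only [if_pos hx, one_mul]
      rw [← hexp]; ring
    · simp only [if_neg hx, zero_mul, mul_zero]
  have hFTL : FT (Lplus q φ) ξ
      = ((Real.sqrt (2 * π) : ℂ))⁻¹ * ((∫ x : ℝ, Complex.exp (-(I * x * ξ)) * φ x)
          - (q : ℂ) * ∫ y : ℝ, ∫ x : ℝ, F (x, y)) := by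
    rw [FT]
    congr 1
    calc ∫ x : ℝ, Complex.exp (-(I * x * ξ)) * Lplus q φ x
        = ∫ x : ℝ, (Complex.exp (-(I * x * ξ)) * φ x - (q : ℂ) * ∫ y, F (x, y)) :=
          integral_congr_ae (ae_of_all _ hGF)
      _ = (∫ x : ℝ, Complex.exp (-(I * x * ξ)) * φ x)
            - ∫ x : ℝ, (q : ℂ) * ∫ y, F (x, y) := integral_sub h1 h2
      _ = _ := by rw [integral_const_mul, hswap]
  have hYint : ∫ y : ℝ, ∫ x : ℝ, F (x, y)
      = (∫ y : ℝ, Complex.exp (I * ξ * |y|) * φ y) / a := by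
    calc ∫ y : ℝ, ∫ x : ℝ, F (x, y)
        = ∫ y : ℝ, Complex.exp (I * ξ * |y|) * φ y / a :=
          integral_congr_ae (ae_of_all _ hsecval)
      _ = _ := integral_div a _
  have hIpos : Integrable (posPart φ) := by
    have hch : posPart φ = (Ici (0 : ℝ)).indicator φ := by
      funext x; simp [_root_.posPart, indicator, mem_Ici]
    rw [hch]; exact hφ.indicator measurableSet_Ici
  have hIneg : Integrable (negPart φ) := by
    have hch : negPart φ = (Iio (0 : ℝ)).indicator φ := by
      funext x; simp [_root_.negPart, indicator, mem_Iio]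
    rw [hch]; exact hφ.indicator measurableSet_Iio
  have hintp : Integrable (fun y : ℝ => Complex.exp (-(I * y * ((-ξ : ℝ) : ℂ))) * posPart φ y) := by
    refine hIpos.bdd_mul (c := 1) ?_ (ae_of_all _ fun y => le_of_eq (norm_cexp_unit y (-ξ)))
    exact (Complex.continuous_exp.comp (((continuous_const.mul
      Complex.continuous_ofReal).mul continuous_const).neg)).aestronglyMeasurable
  have hintn : Integrable (fun y : ℝ => Complex.exp (-(I * y * (ξ : ℂ))) * negPart φ y) := by
    refine hIneg.bdd_mul (c := 1) ?_ (ae_of_all _ fun y => le_of_eq (norm_cexp_unit y ξ))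
    exact (Complex.continuous_exp.comp (((continuous_const.mul
      Complex.continuous_ofReal).mul continuous_const).neg)).aestronglyMeasurable
  have hsplit : ∀ y : ℝ, Complex.exp (I * ξ * |y|) * φ y
      = Complex.exp (-(I * y * ((-ξ : ℝ) : ℂ))) * posPart φ y
        + Complex.exp (-(I * y * (ξ : ℂ))) * negPart φ y := by
    intro y
    by_cases hy : 0 ≤ y
    · simp only [_root_.posPart, _root_.negPart, if_pos hy, if_neg (not_lt.2 hy), mul_zero, add_zero,
        _root_.abs_of_nonneg hy]
      congr 2
      push_cast; ring
    · push_neg at hy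
      simp only [_root_.posPart, _root_.negPart, if_pos hy, if_neg (not_le.2 hy), mul_zero, zero_add,
        _root_.abs_of_neg hy]
      congr 2
      push_cast; ring
  have hsumsplit : ∫ y : ℝ, Complex.exp (I * ξ * |y|) * φ y
      = (∫ y : ℝ, Complex.exp (-(I * y * ((-ξ : ℝ) : ℂ))) * posPart φ y)
        + ∫ y : ℝ, Complex.exp (-(I * y * (ξ : ℂ))) * negPart φ y := by
    rw [← integral_add hintp hintn]
    exact integral_congr_ae (ae_of_all _ hsplit)
  have hr : reflCoeff q ξ = -((q : ℂ) / a) := by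
    rw [reflCoeff, show I * (ξ : ℂ) - q = -a by rw [ha_def]; ring, div_neg]
  rw [hFTL, hYint, hsumsplit, FT, FT, FT, hr]
  simp only [div_eq_mul_inv]
  ring

lemma FT_comp_neg (f : ℝ → ℂ) (ξ : ℝ) : FT (fun x => f (-x)) ξ = FT f (-ξ) := by
  rw [FT, FT]
  congr 1
  have h : ∀ y : ℝ, Complex.exp (-(I * y * ξ)) * f (-y)
      = (fun z : ℝ => Complex.exp (-(I * z * ((-ξ : ℝ) : ℂ))) * f z) (-y) := by
    intro y
    simp only
    congr 2
    push_cast; ring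
  calc ∫ y : ℝ, Complex.exp (-(I * y * ξ)) * f (-y)
      = ∫ y : ℝ, (fun z : ℝ => Complex.exp (-(I * z * ((-ξ : ℝ) : ℂ))) * f z) (-y) :=
        integral_congr_ae (ae_of_all _ h)
    _ = _ := integral_neg_eq_self (fun z : ℝ => Complex.exp (-(I * z * ((-ξ : ℝ) : ℂ))) * f z) _

lemma FT_congr_ae {f g : ℝ → ℂ} (h : f =ᵐ[volume] g) (ξ : ℝ) : FT f ξ = FT g ξ := by
  rw [FT, FT]
  congr 1
  exact integral_congr_ae (h.mono fun y hy => by dsimp only; rw [hy])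

lemma Lminus_eq (q : ℝ) (φ : ℝ → ℂ) (x : ℝ) :
    Lminus q φ x = Lplus q (fun y => φ (-y)) (-x) := by
  simp only [Lminus, Lplus, neg_neg]
  have hI : ∫ y in (-x)..x, (Real.exp (q * |y|) : ℂ) * φ (-y)
      = ∫ y in (-x)..x, (Real.exp (q * |y|) : ℂ) * φ y := by
    have h2 : (fun y : ℝ => (Real.exp (q * |y|) : ℂ) * φ (-y))
        = fun y => (fun z : ℝ => (Real.exp (q * |z|) : ℂ) * φ z) (-y) := by
      funext y; simp [abs_neg]
    rw [h2, intervalIntegral.integral_comp_neg (fun z : ℝ => (Real.exp (q * |z|) : ℂ) * φ z),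
      neg_neg]
  rcases lt_trichotomy x 0 with hx | hx | hx
  · rw [if_neg (not_le.2 hx), if_neg (by linarith : ¬ -x < 0)]
    ring
  · subst hx
    simp
  · rw [if_pos hx.le, if_pos (by linarith : -x < 0), hI, show q * -x = -(q * x) by ring]

theorem distortedFT_two_representations (q : ℝ) (hq : 0 < q)
    (φ : ℝ → ℂ) (hφ : Integrable φ) :
    (∀ ξ : ℝ, 0 ≤ ξ →
      FT (Lplus q φ) ξ
        = FT φ ξ + reflCoeff q ξ * FT (posPart φ) (-ξ)
          + reflCoeff q ξ * FT (negPart φ) ξ) ∧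
    (∀ ξ : ℝ, ξ < 0 →
      FT (Lminus q φ) ξ
        = FT φ ξ + (starRingEnd ℂ) (reflCoeff q ξ) * FT (negPart φ) (-ξ)
          + (starRingEnd ℂ) (reflCoeff q ξ) * FT (posPart φ) ξ) := by
  constructor
  · exact fun ξ hξ => keyPlus q hq φ hφ ξ hξ
  · intro ξ hξ
    set ψ : ℝ → ℂ := fun y => φ (-y) with hψ_def
    have hψ : Integrable ψ := hφ.comp_neg
    have hL : FT (Lminus q φ) ξ = FT (Lplus q ψ) (-ξ) := by
      have h : (Lminus q φ) = fun x => (Lplus q ψ) (-x) := by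
        funext x; exact Lminus_eq q φ x
      rw [h, FT_comp_neg]
    have hk := keyPlus q hq ψ hψ (-ξ) (by linarith)
    simp only [neg_neg] at hk
    have hzero : ∀ᵐ x : ℝ, x ≠ 0 := by
      have h0 : (volume : Measure ℝ) {0} = 0 := measure_singleton 0
      filter_upwards [compl_mem_ae_iff.2 h0] with x hx
      simpa using hx
    have e1 : FT ψ (-ξ) = FT φ ξ := by
      have := FT_comp_neg φ (-ξ)
      rwa [neg_neg] at this
    have e2 : reflCoeff q (-ξ) = (starRingEnd ℂ) (reflCoeff q ξ) := by
      rw [reflCoeff, reflCoeff, map_div₀, Complex.conj_ofReal]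
      congr 1
      rw [map_sub, map_mul, Complex.conj_I, Complex.conj_ofReal, Complex.conj_ofReal]
      push_cast; ring
    have e3 : FT (posPart ψ) ξ = FT (negPart φ) (-ξ) := by
      have hae : posPart ψ =ᵐ[volume] fun x => negPart φ (-x) := by
        filter_upwards [hzero] with x hx
        simp only [_root_.posPart, _root_.negPart, hψ_def]
        rcases lt_trichotomy x 0 with h | h | h
        · rw [if_neg (not_le.2 h), if_neg (by linarith : ¬ -x < 0)]
        · exact absurd h hx
        · rw [if_pos h.le, if_pos (by linarith : -x < 0)]
      rw [FT_congr_ae hae, FT_comp_neg]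
    have e4 : FT (negPart ψ) (-ξ) = FT (posPart φ) ξ := by
      have hae : negPart ψ =ᵐ[volume] fun x => posPart φ (-x) := by
        filter_upwards [hzero] with x hx
        simp only [_root_.posPart, _root_.negPart, hψ_def]
        rcases lt_trichotomy x 0 with h | h | h
        · rw [if_pos h, if_pos (by linarith : (0:ℝ) ≤ -x)]
        · exact absurd h hx
        · rw [if_neg (not_lt.2 h.le), if_neg (by linarith : ¬ (0:ℝ) ≤ -x)]
      rw [FT_congr_ae hae, FT_comp_neg, neg_neg]
    rw [hL, hk, e1, e2, e3, e4]
end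

section
/- Let q > 0, y < 0, and let f : ℝ → ℂ be measurable, locally integrable, and satisfy ∫_0^{∞} e^{−qw}|f(w)| dw < ∞. Then e^{qy} ∫_y^0 e^{−2qz} (∫_{−z}^{∞} e^{−qw} f(w) dw) dz = e^{qy} ∫_0^{−y} e^{2qz} (∫_{z}^{∞} e^{−qw} f(w) dw) dz = (1/(2q)) e^{qy} ∫_0^{−y} e^{qz} f(z) dz + (1/(2q)) e^{−qy} ∫_{−y}^{∞} e^{−qz} f(z) dz − (1/(2q)) e^{qy} ∫_0^{∞} e^{−qz} f(z) dz. -/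
set_option maxHeartbeats 1000000

open Complex MeasureTheory

lemma exp_integral_aux (c : ℝ) (hc : c ≠ 0) (a b : ℝ) :
    ∫ x in a..b, Real.exp (c * x) = (Real.exp (c * b) - Real.exp (c * a)) / c := by
  have D : ∀ x : ℝ, HasDerivAt (fun y : ℝ => Real.exp (c * y) / c) (Real.exp (c * x)) x := by
    intro x
    have h1 : HasDerivAt (fun y : ℝ => c * y) c x := by
      simpa using (hasDerivAt_id x).const_mul c
    have h2 := h1.exp.div_const c
    rwa [mul_div_assoc, div_self hc, mul_one] at h2
  rw [intervalIntegral.integral_deriv_eq_sub' _ (funext fun x => (D x).deriv)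
    (fun x _ => (D x).differentiableAt)
    ((Real.continuous_exp.comp (continuous_const.mul continuous_id)).continuousOn)]
  ring

lemma fubini_key (q T : ℝ) (hq : 0 < q) (hT : 0 < T) (g : ℝ → ℂ)
    (hg_meas : Measurable g) (hg_int : IntegrableOn g (Set.Ici 0)) :
    (∫ z in Set.Ioc (0:ℝ) T, ((Real.exp (2*q*z):ℝ):ℂ) * ∫ w in Set.Ici z, g w)
      = ((1/(2*q):ℝ):ℂ) * (∫ z in Set.Ioc (0:ℝ) T, ((Real.exp (2*q*z):ℝ):ℂ) * g z)
        + (((Real.exp (2*q*T)-1)/(2*q):ℝ):ℂ) * (∫ w in Set.Ici T, g w)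
        - ((1/(2*q):ℝ):ℂ) * (∫ z in Set.Ioc (0:ℝ) T, g z) := by
  have h2q : (2 * q) ≠ 0 := by positivity
  have hB : ∀ z ∈ Set.Ioc (0:ℝ) T, ((Real.exp (2*q*z):ℝ):ℂ) * ∫ w in Set.Ici z, g w
      = ∫ w in Set.Ici (0:ℝ), ((Real.exp (2*q*z):ℝ):ℂ) * Set.indicator (Set.Ici z) g w := by
    intro z hz
    symm
    rw [MeasureTheory.integral_const_mul, MeasureTheory.integral_indicator measurableSet_Ici,
      Measure.restrict_restrict measurableSet_Ici,
      Set.inter_eq_self_of_subset_left (Set.Ici_subset_Ici.mpr hz.1.le)]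
  rw [MeasureTheory.setIntegral_congr_fun measurableSet_Ioc hB]
  have hFmeas : AEStronglyMeasurable
      (Function.uncurry fun z w => ((Real.exp (2*q*z):ℝ):ℂ) * Set.indicator (Set.Ici z) g w)
      ((volume.restrict (Set.Ioc (0:ℝ) T)).prod (volume.restrict (Set.Ici (0:ℝ)))) := by
    apply Measurable.aestronglyMeasurable
    have heq : (Function.uncurry fun z w => ((Real.exp (2*q*z):ℝ):ℂ) * Set.indicator (Set.Ici z) g w)
        = fun p : ℝ × ℝ => ((Real.exp (2*q*p.1):ℝ):ℂ) *
            Set.indicator {p : ℝ × ℝ | p.1 ≤ p.2} (fun p => g p.2) p := by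
      ext p
      by_cases h : p.1 ≤ p.2 <;>
        simp [Function.uncurry, Set.indicator_apply, Set.mem_Ici, h]
    rw [heq]
    exact ((Complex.measurable_ofReal.comp ((measurable_fst.const_mul (2*q)).exp)).mul
      ((hg_meas.comp measurable_snd).indicator (measurableSet_le measurable_fst measurable_snd)))
  have hFint : Integrable
      (Function.uncurry fun z w => ((Real.exp (2*q*z):ℝ):ℂ) * Set.indicator (Set.Ici z) g w)
      ((volume.restrict (Set.Ioc (0:ℝ) T)).prod (volume.restrict (Set.Ici (0:ℝ)))) := by
    rw [MeasureTheory.integrable_prod_iff hFmeas]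
    constructor
    · refine Filter.Eventually.of_forall fun z => ?_
      simp only [Function.uncurry_apply_pair]
      exact (hg_int.indicator measurableSet_Ici).const_mul _
    · apply MeasureTheory.Integrable.mono'
        ((MeasureTheory.integrableOn_const_iff
            (C := Real.exp (2*q*T) * (∫ w in Set.Ici (0:ℝ), ‖g w‖))).mpr
          (Or.inr measure_Ioc_lt_top))
        hFmeas.norm.integral_prod_right'
      filter_upwards [MeasureTheory.ae_restrict_mem measurableSet_Ioc] with z hz
      simp only [Function.uncurry_apply_pair]
      rw [Real.norm_eq_abs, _root_.abs_of_nonneg (integral_nonneg fun w => norm_nonneg _)]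
      calc (∫ w in Set.Ici (0:ℝ), ‖((Real.exp (2*q*z):ℝ):ℂ) * Set.indicator (Set.Ici z) g w‖)
          ≤ ∫ w in Set.Ici (0:ℝ), Real.exp (2*q*T) * ‖g w‖ := by
            apply MeasureTheory.integral_mono_of_nonneg
              (Filter.Eventually.of_forall fun w => norm_nonneg _) (hg_int.norm.const_mul _)
            refine Filter.Eventually.of_forall fun w => ?_
            beta_reduce
            rw [norm_mul, Complex.norm_real, Real.norm_eq_abs, abs_of_pos (Real.exp_pos _)]
            exact mul_le_mul
              (Real.exp_le_exp.2 (mul_le_mul_of_nonneg_left hz.2 (by positivity)))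
              (norm_indicator_le_norm_self _ _) (norm_nonneg _) (Real.exp_pos _).le
        _ = Real.exp (2*q*T) * (∫ w in Set.Ici (0:ℝ), ‖g w‖) :=
            MeasureTheory.integral_const_mul _ _
  rw [MeasureTheory.integral_integral_swap hFint]
  have hinner : ∀ w ∈ Set.Ici (0:ℝ),
      (∫ z in Set.Ioc (0:ℝ) T, ((Real.exp (2*q*z):ℝ):ℂ) * Set.indicator (Set.Ici z) g w)
      = (((Real.exp (2*q*(min T w)) - 1)/(2*q) : ℝ):ℂ) * g w := by
    intro w hw
    have hswap : ∀ z : ℝ, ((Real.exp (2*q*z):ℝ):ℂ) * Set.indicator (Set.Ici z) g w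
        = Set.indicator (Set.Iic w) (fun z => ((Real.exp (2*q*z):ℝ):ℂ) * g w) z := by
      intro z
      by_cases h : z ≤ w <;> simp [Set.indicator_apply, Set.mem_Ici, Set.mem_Iic, h]
    simp_rw [hswap]
    rw [MeasureTheory.integral_indicator measurableSet_Iic,
      Measure.restrict_restrict measurableSet_Iic, Set.inter_comm, Set.Ioc_inter_Iic,
      MeasureTheory.integral_mul_const]
    congr 1
    have hm : (0:ℝ) ≤ min T w := le_min hT.le hw
    rw [← intervalIntegral.integral_of_le hm, intervalIntegral.integral_ofReal,
      exp_integral_aux (2*q) h2q]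
    norm_num
  rw [MeasureTheory.setIntegral_congr_fun measurableSet_Ici hinner]
  have hbd : IntegrableOn
      (fun w => (((Real.exp (2*q*(min T w)) - 1)/(2*q) : ℝ):ℂ) * g w) (Set.Ici 0) := by
    apply MeasureTheory.Integrable.bdd_mul (c := (Real.exp (2*q*T) + 1)/(2*q)) hg_int
    · apply Continuous.aestronglyMeasurable
      exact Complex.continuous_ofReal.comp (((Real.continuous_exp.comp
        (continuous_const.mul (continuous_const.min continuous_id))).sub
          continuous_const).div_const _)
    · refine Filter.Eventually.of_forall fun w => ?_
      rw [Complex.norm_real, Real.norm_eq_abs, abs_div,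
        abs_of_pos (by positivity : (0:ℝ) < 2*q)]
      apply div_le_div_of_nonneg_right _ (by positivity)
      have h1 : Real.exp (2*q*(min T w)) ≤ Real.exp (2*q*T) :=
        Real.exp_le_exp.2 (mul_le_mul_of_nonneg_left (min_le_left _ _) (by positivity))
      have h2 := Real.exp_pos (2*q*(min T w))
      rw [abs_le]
      constructor <;> nlinarith [Real.exp_pos (2*q*T)]
  have hdisj : Disjoint (Set.Ico (0:ℝ) T) (Set.Ici T) :=
    (Set.Iio_disjoint_Ici le_rfl).mono_left Set.Ico_subset_Iio_self
  rw [← Set.Ico_union_Ici_eq_Ici hT.le,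
    MeasureTheory.setIntegral_union hdisj measurableSet_Ici
      (hbd.mono_set (fun x hx => hx.1)) (hbd.mono_set (fun x hx => hT.le.trans hx))]
  have hIcc : IntegrableOn (fun w => ((Real.exp (2*q*w):ℝ):ℂ) * g w) (Set.Icc (0:ℝ) T) :=
    MeasureTheory.IntegrableOn.continuousOn_mul
      (Continuous.continuousOn (Complex.continuous_ofReal.comp
        (Real.continuous_exp.comp (continuous_const.mul continuous_id))))
      (hg_int.mono_set Set.Icc_subset_Ici_self) isCompact_Icc
  have hpiece2 : (∫ w in Set.Ici T, (((Real.exp (2*q*(min T w)) - 1)/(2*q) : ℝ):ℂ) * g w)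
      = (((Real.exp (2*q*T) - 1)/(2*q) : ℝ):ℂ) * ∫ w in Set.Ici T, g w := by
    rw [← MeasureTheory.integral_const_mul]
    exact MeasureTheory.setIntegral_congr_fun measurableSet_Ici
      (fun w hw => by rw [min_eq_left hw])
  have hpiece1 : (∫ w in Set.Ico (0:ℝ) T, (((Real.exp (2*q*(min T w)) - 1)/(2*q) : ℝ):ℂ) * g w)
      = ((1/(2*q) : ℝ):ℂ) * (∫ w in Set.Ico (0:ℝ) T, ((Real.exp (2*q*w):ℝ):ℂ) * g w)
        - ((1/(2*q) : ℝ):ℂ) * (∫ w in Set.Ico (0:ℝ) T, g w) := by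
    rw [← MeasureTheory.integral_const_mul, ← MeasureTheory.integral_const_mul,
      ← MeasureTheory.integral_sub ((hIcc.mono_set Set.Ico_subset_Icc_self).const_mul _)
        (((hg_int.mono_set Set.Ico_subset_Ici_self)).const_mul _)]
    apply MeasureTheory.setIntegral_congr_fun measurableSet_Ico
    intro w hw
    beta_reduce
    rw [min_eq_right hw.2.le]
    push_cast
    ring
  rw [hpiece1, hpiece2]
  simp only [MeasureTheory.integral_Ico_eq_integral_Ioo,
    MeasureTheory.integral_Ioc_eq_integral_Ioo]
  ring

theorem iterated_exp_integral_pos (q y : ℝ) (hq : 0 < q) (hy : y < 0)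
    (f : ℝ → ℂ) (hmeas : Measurable f) (hloc : LocallyIntegrable f)
    (hint : IntegrableOn (fun w : ℝ => Real.exp (-(q * w)) * ‖f w‖) (Set.Ici 0)) :
    (((Real.exp (q * y) : ℝ) : ℂ) *
        ∫ z in y..0, ((Real.exp (-(2 * q * z)) : ℝ) : ℂ) *
          ∫ w in Set.Ici (-z), ((Real.exp (-(q * w)) : ℝ) : ℂ) * f w)
      = ((Real.exp (q * y) : ℝ) : ℂ) *
          ∫ z in (0 : ℝ)..(-y), ((Real.exp (2 * q * z) : ℝ) : ℂ) *
            ∫ w in Set.Ici z, ((Real.exp (-(q * w)) : ℝ) : ℂ) * f w ∧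
    (((Real.exp (q * y) : ℝ) : ℂ) *
        ∫ z in y..0, ((Real.exp (-(2 * q * z)) : ℝ) : ℂ) *
          ∫ w in Set.Ici (-z), ((Real.exp (-(q * w)) : ℝ) : ℂ) * f w)
      = ((1 / (2 * q) * Real.exp (q * y) : ℝ) : ℂ) *
          (∫ z in (0 : ℝ)..(-y), ((Real.exp (q * z) : ℝ) : ℂ) * f z)
        + ((1 / (2 * q) * Real.exp (-(q * y)) : ℝ) : ℂ) *
          (∫ z in Set.Ici (-y), ((Real.exp (-(q * z)) : ℝ) : ℂ) * f z)
        - ((1 / (2 * q) * Real.exp (q * y) : ℝ) : ℂ) *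
          (∫ z in Set.Ici (0 : ℝ), ((Real.exp (-(q * z)) : ℝ) : ℂ) * f z) := by
  set g : ℝ → ℂ := fun w => ((Real.exp (-(q * w)) : ℝ) : ℂ) * f w with hg_def
  have hg_meas : Measurable g := by
    apply Measurable.mul _ hmeas
    exact Complex.measurable_ofReal.comp ((measurable_id.const_mul q).neg.exp)
  have hg_int : IntegrableOn g (Set.Ici 0) := by
    rw [IntegrableOn, ← integrable_norm_iff hg_meas.aestronglyMeasurable]
    have : (fun w => ‖g w‖) = fun w : ℝ => Real.exp (-(q * w)) * ‖f w‖ := by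
      funext w
      rw [hg_def, norm_mul, Complex.norm_real, Real.norm_eq_abs, abs_of_pos (Real.exp_pos _)]
    rw [this]; exact hint
  have part1 : (∫ z in y..0, ((Real.exp (-(2 * q * z)) : ℝ) : ℂ) *
        ∫ w in Set.Ici (-z), g w)
      = ∫ z in (0 : ℝ)..(-y), ((Real.exp (2 * q * z) : ℝ) : ℂ) * ∫ w in Set.Ici z, g w := by
    have h := intervalIntegral.integral_comp_neg (a := y) (b := 0)
      (fun z => ((Real.exp (2 * q * z) : ℝ) : ℂ) * ∫ w in Set.Ici z, g w)
    simp only [neg_zero, mul_neg] at h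
    exact h
  refine ⟨by rw [part1], ?_⟩
  set T := -y with hTdef
  have hT : 0 < T := neg_pos.mpr hy
  rw [part1, intervalIntegral.integral_of_le hT.le, intervalIntegral.integral_of_le hT.le]
  have hAeq : (∫ z in Set.Ioc (0:ℝ) T, ((Real.exp (q * z) : ℝ) : ℂ) * f z)
      = ∫ z in Set.Ioc (0:ℝ) T, ((Real.exp (2 * q * z) : ℝ) : ℂ) * g z := by
    apply MeasureTheory.setIntegral_congr_fun measurableSet_Ioc
    intro z _
    beta_reduce
    rw [hg_def, ← mul_assoc, ← Complex.ofReal_mul, ← Real.exp_add,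
      show 2 * q * z + -(q * z) = q * z from by ring]
  rw [hAeq, fubini_key q T hq hT g hg_meas hg_int]
  have hCB : (∫ w in Set.Ici (0:ℝ), g w)
      = (∫ z in Set.Ioc (0:ℝ) T, g z) + ∫ w in Set.Ici T, g w := by
    rw [MeasureTheory.integral_Ici_eq_integral_Ioi, ← Set.Ioc_union_Ioi_eq_Ioi hT.le,
      MeasureTheory.setIntegral_union Set.Ioc_disjoint_Ioi_same measurableSet_Ioi
        (hg_int.mono_set (fun x hx => hx.1.le))
        (hg_int.mono_set (fun x hx => (hT.trans hx).le)),
      MeasureTheory.integral_Ici_eq_integral_Ioi]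
  have hE : Real.exp (-(q * y)) = Real.exp (2 * q * T) * Real.exp (q * y) := by
    rw [← Real.exp_add]; congr 1; rw [hTdef]; ring
  rw [hCB, hE]
  push_cast
  ring
end
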